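/- Let F be a field with a valuation ν : F^× → Γ into a totally ordered abelian group Γ, with ring of integers O_F. Then every τ ∈ GL_n(F) can be written as τ = A·U·Λ where A ∈ GL_n(O_F), U is a unipotent upper triangular matrix over F, and Λ is an invertible diagonal matrix over F. -/

import Mathlib

open Matrix

section Aux

variable {F : Type*} [Field F] {Γ₀ : Type*} [LinearOrderedCommGroupWithZero Γ₀]
  (v : Valuation F Γ₀)

lemma iwa_mul_int {n : Type*} [Fintype n] {M N : Matrix n n F}
    (hM : ∀ i j, v (M i j) ≤ 1) (hN : ∀ i j, v (N i j) ≤ 1) :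
    ∀ i j, v ((M * N) i j) ≤ 1 := by
  intro i j
  rw [Matrix.mul_apply]
  refine v.map_sum_le fun k _ => ?_
  rw [v.map_mul]
  exact mul_le_one' (hM i k) (hN k j)

lemma iwa_det_le {n : Type*} [Fintype n] [DecidableEq n] {M : Matrix n n F}
    (h : ∀ i j, v (M i j) ≤ 1) : v M.det ≤ 1 := by
  rw [Matrix.det_apply]
  refine v.map_sum_le fun σ _ => ?_
  have h1 : v (Equiv.Perm.sign σ • ∏ i, M (σ i) i) = v (∏ i, M (σ i) i) := by
    rcases Int.units_eq_one_or (Equiv.Perm.sign σ) with h1 | h1 <;>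
      simp [h1, Units.smul_def, v.map_neg]
  rw [h1, map_prod]
  exact Finset.prod_le_one' fun i _ => h _ _

/-- Extend an `n × n` matrix to an `(n+1) × (n+1)` block matrix `[[1,0],[0,M]]`. -/
def iwaExt {R : Type*} [Zero R] [One R] {n : ℕ} (M : Matrix (Fin n) (Fin n) R) :
    Matrix (Fin (n + 1)) (Fin (n + 1)) R :=
  Matrix.of fun i => Fin.cases (Fin.cons 1 0) (fun i' => Fin.cons 0 (M i')) i

variable {R : Type*} {n : ℕ}

@[simp] lemma iwaExt_zero_zero [Zero R] [One R] (M : Matrix (Fin n) (Fin n) R) :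
    iwaExt M 0 0 = 1 := rfl

@[simp] lemma iwaExt_zero_succ [Zero R] [One R] (M : Matrix (Fin n) (Fin n) R) (j : Fin n) :
    iwaExt M 0 j.succ = 0 := by simp [iwaExt]

@[simp] lemma iwaExt_succ_zero [Zero R] [One R] (M : Matrix (Fin n) (Fin n) R) (i : Fin n) :
    iwaExt M i.succ 0 = 0 := by simp [iwaExt]

@[simp] lemma iwaExt_succ_succ [Zero R] [One R] (M : Matrix (Fin n) (Fin n) R) (i j : Fin n) :
    iwaExt M i.succ j.succ = M i j := by simp [iwaExt]

lemma iwaExt_mul [NonAssocSemiring R] (M N : Matrix (Fin n) (Fin n) R) :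
    iwaExt M * iwaExt N = iwaExt (M * N) := by
  ext i j
  rw [Matrix.mul_apply, Fin.sum_univ_succ]
  induction i using Fin.cases <;> induction j using Fin.cases <;>
    simp [Matrix.mul_apply]

lemma iwaExt_one [NonAssocSemiring R] : (iwaExt (1 : Matrix (Fin n) (Fin n) R)) = 1 := by
  ext i j
  induction i using Fin.cases <;> induction j using Fin.cases <;>
    simp [Matrix.one_apply, Fin.succ_ne_zero, (Fin.succ_ne_zero _).symm, Fin.succ_inj]

lemma iwaExt_det [CommRing R] (M : Matrix (Fin n) (Fin n) R) :
    (iwaExt M).det = M.det := by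
  rw [Matrix.det_succ_column_zero, Fin.sum_univ_succ]
  simp [Fin.succAbove_zero]
  congr 1

end Aux

lemma iwa_key {F : Type*} [Field F] {Γ₀ : Type*} [LinearOrderedCommGroupWithZero Γ₀]
    (v : Valuation F Γ₀) :
    ∀ (n : ℕ) (τ : Matrix (Fin n) (Fin n) F), τ.det ≠ 0 →
    ∃ E c : Matrix (Fin n) (Fin n) F,
      (∀ i j, v (E i j) ≤ 1) ∧ v E.det = 1 ∧
      (∀ i j : Fin n, j < i → c i j = 0) ∧
      E * τ * c = 1 := by
  intro n
  induction n with
  | zero =>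
    intro τ _
    exact ⟨1, 1, fun i => i.elim0, by simp, fun i => i.elim0, Subsingleton.elim _ _⟩
  | succ n IH =>
    intro τ hτ
    -- column 0 is nonzero
    have hcol : ∃ i, τ i 0 ≠ 0 := by
      by_contra h
      push_neg at h
      exact hτ (Matrix.det_eq_zero_of_column_eq_zero 0 h)
    obtain ⟨i₁, hi₁⟩ := hcol
    obtain ⟨i₀, -, hmax⟩ :=
      Finset.exists_max_image Finset.univ (fun i => v (τ i 0)) ⟨i₁, Finset.mem_univ _⟩
    set u : F := τ i₀ 0 with hu
    have hu0 : u ≠ 0 := by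
      intro h
      apply hi₁
      have h1 := hmax i₁ (Finset.mem_univ _)
      rw [h, v.map_zero] at h1
      have h2 : v (τ i₁ 0) = 0 := le_antisymm h1 zero_le'
      exact v.zero_iff.mp h2
    set σ : Equiv.Perm (Fin (n + 1)) := Equiv.swap 0 i₀ with hσ
    set P : Matrix (Fin (n + 1)) (Fin (n + 1)) F := σ.permMatrix F with hP
    set τ₂ : Matrix (Fin (n + 1)) (Fin (n + 1)) F := P * τ with hτ₂def
    have hτ₂ : ∀ i j, τ₂ i j = τ (σ i) j := by
      intro i j
      rw [hτ₂def, hP, Equiv.Perm.permMatrix, PEquiv.toMatrix_toPEquiv_mul]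
      rfl
    have hτ₂00 : τ₂ 0 0 = u := by rw [hτ₂, hσ, hu]; simp [Equiv.swap_apply_left]
    have hmax₂ : ∀ i, v (τ₂ i 0) ≤ v u := by
      intro i; rw [hτ₂]; exact hmax _ (Finset.mem_univ _)
    set Ec : Matrix (Fin (n + 1)) (Fin (n + 1)) F :=
      Matrix.of (fun i j => if i = j then 1 else if j = 0 then -(τ₂ i 0) * u⁻¹ else 0)
      with hEc
    have hEcInt : ∀ i j, v (Ec i j) ≤ 1 := by
      intro i j
      rw [hEc]
      dsimp only [Matrix.of_apply]
      split_ifs with h1 h2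
      · simp
      · rw [v.map_mul, v.map_neg, map_inv₀]
        rw [mul_inv_le_iff₀ (zero_lt_iff.mpr ((v.ne_zero_iff).mpr hu0)), one_mul]
        exact hmax₂ i
      · simp
    have hEcLow : Ec.BlockTriangular OrderDual.toDual := by
      intro i j hij
      have hij' : i < j := hij
      rw [hEc]
      dsimp only [Matrix.of_apply]
      rw [if_neg (by exact hij'.ne), if_neg (by rintro rfl; exact (Fin.not_lt_zero i) hij')]
    have hEcDet : Ec.det = 1 := by
      rw [Matrix.det_of_lowerTriangular _ hEcLow]
      have : ∀ i, Ec i i = 1 := fun i => by rw [hEc]; simp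
      simp [this]
    set τ₃ : Matrix (Fin (n + 1)) (Fin (n + 1)) F := Ec * τ₂ with hτ₃def
    have hτ₃ : ∀ i j, τ₃ i j = (if i = 0 then 0 else -(τ₂ i 0) * u⁻¹ * τ₂ 0 j) + τ₂ i j := by
      intro i j
      rw [hτ₃def, Matrix.mul_apply, Fin.sum_univ_succ, hEc]
      rcases eq_or_ne i 0 with rfl | hi
      · simp [Matrix.one_apply, Fin.succ_ne_zero, (Fin.succ_ne_zero _).symm]
      · simp only [Matrix.of_apply, if_neg (by simpa using (Ne.symm hi)), if_pos rfl,
          if_neg hi]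
        rw [Finset.sum_congr rfl (g := fun k : Fin n => if i = k.succ then τ₂ k.succ j else 0)
          (fun k _ => by by_cases h : i = k.succ <;> simp [h, Fin.succ_ne_zero, Ne.symm])]
        rcases Fin.eq_zero_or_eq_succ i with rfl | ⟨i', rfl⟩
        · exact absurd rfl hi
        · rw [Finset.sum_eq_single i']
          · simp
          · intro k _ hk
            rw [if_neg (by simpa [Fin.succ_inj] using Ne.symm hk)]
          · simp
    have hτ₃0 : ∀ j, τ₃ 0 j = τ₂ 0 j := fun j => by rw [hτ₃]; simp
    have hτ₃00 : τ₃ 0 0 = u := by rw [hτ₃0, hτ₂00]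
    have hτ₃c0 : ∀ i, i ≠ 0 → τ₃ i 0 = 0 := by
      intro i hi
      rw [hτ₃, if_neg hi, hτ₂00]
      field_simp
      ring
    set c₁ : Matrix (Fin (n + 1)) (Fin (n + 1)) F :=
      Matrix.of (fun j k =>
        if j = 0 then (if k = 0 then u⁻¹ else -(τ₃ 0 k) * u⁻¹)
        else if j = k then 1 else 0) with hc₁
    have hc₁up : ∀ i j : Fin (n + 1), j < i → c₁ i j = 0 := by
      intro i j hij
      rw [hc₁]
      dsimp only [Matrix.of_apply]
      rw [if_neg (by rintro rfl; exact (Fin.not_lt_zero j) hij), if_neg hij.ne']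
    set τ₄ : Matrix (Fin (n + 1)) (Fin (n + 1)) F := τ₃ * c₁ with hτ₄def
    have hτ₄ : ∀ i k, τ₄ i k = τ₃ i 0 * c₁ 0 k + (if k = 0 then 0 else τ₃ i k) := by
      intro i k
      rw [hτ₄def, Matrix.mul_apply, Fin.sum_univ_succ]
      congr 1
      rw [Finset.sum_congr rfl (g := fun j : Fin n => if j.succ = k then τ₃ i k else 0)
        (fun j _ => by
          by_cases h : j.succ = k
          · subst h
            simp [hc₁, Fin.succ_ne_zero]
          · simp [hc₁, h, Fin.succ_ne_zero])]
      rcases eq_or_ne k 0 with rfl | hk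
      · rw [if_pos rfl, Finset.sum_eq_zero]
        intro j _
        rw [if_neg (Fin.succ_ne_zero j)]
      · rw [if_neg hk]
        rcases Fin.eq_zero_or_eq_succ k with rfl | ⟨k', rfl⟩
        · exact absurd rfl hk
        · rw [Finset.sum_eq_single k']
          · simp
          · intro j _ hj
            rw [if_neg (by simpa [Fin.succ_inj] using hj)]
          · simp
    have hc₁00 : c₁ 0 0 = u⁻¹ := by rw [hc₁]; simp
    have hτ₄00 : τ₄ 0 0 = 1 := by
      rw [hτ₄, hτ₃00, hc₁00, if_pos rfl, add_zero, mul_inv_cancel₀ hu0]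
    have hτ₄s0 : ∀ i : Fin n, τ₄ i.succ 0 = 0 := by
      intro i
      rw [hτ₄, hτ₃c0 _ (Fin.succ_ne_zero i), if_pos rfl, zero_mul, add_zero]
    have hτ₄0s : ∀ k : Fin n, τ₄ 0 k.succ = 0 := by
      intro k
      rw [hτ₄, if_neg (Fin.succ_ne_zero k), hτ₃00, hc₁]
      dsimp only [Matrix.of_apply]
      rw [if_pos rfl, if_neg (Fin.succ_ne_zero k)]
      field_simp
      ring
    set τ' : Matrix (Fin n) (Fin n) F := Matrix.of (fun i j => τ₄ i.succ j.succ) with hτ'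
    have hext : τ₄ = iwaExt τ' := by
      ext i j
      induction i using Fin.cases with
      | zero =>
        induction j using Fin.cases with
        | zero => rw [hτ₄00]; rfl
        | succ j => rw [hτ₄0s]; simp
      | succ i =>
        induction j using Fin.cases with
        | zero => rw [hτ₄s0]; simp
        | succ j => simp [hτ']
    -- determinants
    have hPdet : P.det ≠ 0 := by
      rw [hP, Matrix.det_permutation]
      rcases Int.units_eq_one_or (Equiv.Perm.sign σ) with h1 | h1 <;> simp [h1]
    have hc₁Up : c₁.BlockTriangular id := fun i j hij => hc₁up i j hij
    have hc₁det : c₁.det ≠ 0 := by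
      rw [Matrix.det_of_upperTriangular hc₁Up]
      refine Finset.prod_ne_zero_iff.2 fun i _ => ?_
      rcases eq_or_ne i 0 with rfl | hi
      · rw [hc₁00]; exact inv_ne_zero hu0
      · rw [hc₁]; simp [hi]
    have hτ'det : τ'.det ≠ 0 := by
      have : τ₄.det = Ec.det * P.det * τ.det * c₁.det := by
        rw [hτ₄def, hτ₃def, hτ₂def, Matrix.det_mul, Matrix.det_mul, Matrix.det_mul]
        ring
      rw [← iwaExt_det τ', ← hext, this, hEcDet]
      simp only [one_mul]
      exact mul_ne_zero (mul_ne_zero hPdet hτ) hc₁det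
    obtain ⟨E', c', hE'Int, hE'det, hc'up, hEq'⟩ := IH τ' hτ'det
    refine ⟨iwaExt E' * (Ec * P), c₁ * iwaExt c', ?_, ?_, ?_, ?_⟩
    · refine iwa_mul_int v (fun i j => ?_) (iwa_mul_int v hEcInt ?_)
      · induction i using Fin.cases <;> induction j using Fin.cases <;>
          simp [hE'Int]
      · intro i j
        rw [hP]
        dsimp [Equiv.Perm.permMatrix, PEquiv.toMatrix_apply]
        split_ifs <;> simp <;> split_ifs <;> simp
    · rw [Matrix.det_mul, Matrix.det_mul, iwaExt_det, hEcDet, v.map_mul, v.map_mul, hE'det,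
        hP, Matrix.det_permutation]
      rcases Int.units_eq_one_or (Equiv.Perm.sign σ) with h1 | h1 <;>
        simp [h1, v.map_neg]
    · intro i j hij
      have h1 : c₁.BlockTriangular id := hc₁Up
      have h2 : (iwaExt c').BlockTriangular id := by
        intro a b hab
        induction a using Fin.cases with
        | zero => exact absurd hab (Fin.not_lt_zero _)
        | succ a =>
          induction b using Fin.cases with
          | zero => simp
          | succ b =>
            rw [iwaExt_succ_succ]
            exact hc'up _ _ (by simpa using hab)
      exact h1.mul h2 hij
    · have : iwaExt E' * (Ec * P) * τ * (c₁ * iwaExt c')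
          = iwaExt E' * τ₄ * iwaExt c' := by
        rw [hτ₄def, hτ₃def, hτ₂def]
        noncomm_ring
      rw [this, hext, iwaExt_mul, iwaExt_mul, hEq', iwaExt_one]


/-- **Iwasawa decomposition for `GLₙ` over a valuation field.**
`F` is a field with a valuation `v` (written multiplicatively, so the ring of
integers is `{x : v x ≤ 1}`).  Every invertible matrix `τ` over `F` factors as
`τ = A * U * Λ` where `A` is invertible over the ring of integers (its inverse
also has integral entries), `U` is unipotent upper triangular and `Λ` is an
invertible diagonal matrix. -/
theorem iwasawa_decomposition_GLn
    {F : Type*} [Field F] {Γ₀ : Type*} [LinearOrderedCommGroupWithZero Γ₀]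
    (v : Valuation F Γ₀) (n : ℕ)
    (τ : Matrix (Fin n) (Fin n) F) (hτ : IsUnit τ) :
    ∃ A U Λ : Matrix (Fin n) (Fin n) F,
      -- `A ∈ GLₙ(O_F)` : `A` and its inverse have entries in the ring of integers
      (∀ i j, v (A i j) ≤ 1) ∧
      (∃ B : Matrix (Fin n) (Fin n) F,
        (∀ i j, v (B i j) ≤ 1) ∧ A * B = 1 ∧ B * A = 1) ∧
      -- `U` is unipotent upper triangular
      (∀ i j : Fin n, j < i → U i j = 0) ∧ (∀ i, U i i = 1) ∧
      -- `Λ` is an invertible diagonal matrix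
      (∀ i j : Fin n, i ≠ j → Λ i j = 0) ∧ (∀ i, Λ i i ≠ 0) ∧
      τ = A * U * Λ := by
  have hdet : τ.det ≠ 0 := ((Matrix.isUnit_iff_isUnit_det τ).mp hτ).ne_zero
  obtain ⟨E, c, hEInt, hEdet, hcup, hEq⟩ := iwa_key v n τ hdet
  have hEdet0 : E.det ≠ 0 := by
    intro h
    rw [h, v.map_zero] at hEdet
    exact zero_ne_one hEdet
  have hEunit : IsUnit E.det := isUnit_iff_ne_zero.mpr hEdet0
  have hcdet0 : c.det ≠ 0 := by
    have h1 : E.det * τ.det * c.det = 1 := by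
      rw [← Matrix.det_mul, ← Matrix.det_mul, hEq, Matrix.det_one]
    intro h
    rw [h, mul_zero] at h1
    exact zero_ne_one h1
  have hcunit : IsUnit c.det := isUnit_iff_ne_zero.mpr hcdet0
  have h1 : E * (τ * c) = 1 := by rw [← Matrix.mul_assoc]; exact hEq
  have h2 : τ * c = E⁻¹ := by
    calc τ * c = E⁻¹ * (E * (τ * c)) := by
          rw [← Matrix.mul_assoc, Matrix.nonsing_inv_mul E hEunit, Matrix.one_mul]
    _ = E⁻¹ := by rw [h1, Matrix.mul_one]
  have hτeq : τ = E⁻¹ * c⁻¹ := by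
    rw [← h2, Matrix.mul_assoc, Matrix.mul_nonsing_inv c hcunit, Matrix.mul_one]
  set d : Matrix (Fin n) (Fin n) F := c⁻¹ with hd
  have hdup : d.BlockTriangular id := by
    letI := c.invertibleOfIsUnitDet hcunit
    exact Matrix.blockTriangular_inv_of_blockTriangular (fun i j hij => hcup i j hij)
  have hddet0 : d.det ≠ 0 := by
    rw [hd, Matrix.det_nonsing_inv, Ring.inverse_eq_inv']
    exact inv_ne_zero hcdet0
  have hdd : ∀ i, d i i ≠ 0 := by
    rw [Matrix.det_of_upperTriangular hdup] at hddet0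
    exact fun i => Finset.prod_ne_zero_iff.mp hddet0 i (Finset.mem_univ i)
  refine ⟨E⁻¹, Matrix.of fun i j => d i j * (d j j)⁻¹, Matrix.diagonal fun i => d i i,
    ?_, ⟨E, hEInt, Matrix.nonsing_inv_mul E hEunit, Matrix.mul_nonsing_inv E hEunit⟩,
    ?_, ?_, ?_, ?_, ?_⟩
  · intro i j
    rw [Matrix.inv_def, Matrix.smul_apply, smul_eq_mul, Ring.inverse_eq_inv', v.map_mul,
      map_inv₀, hEdet, inv_one, one_mul, Matrix.adjugate_apply]
    refine iwa_det_le v fun a b => ?_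
    rw [Matrix.updateRow_apply]
    split_ifs with h
    · rw [Pi.single_apply]
      split_ifs <;> simp
    · exact hEInt a b
  · intro i j hij
    dsimp only [Matrix.of_apply]
    rw [hdup hij, zero_mul]
  · intro i
    dsimp only [Matrix.of_apply]
    exact mul_inv_cancel₀ (hdd i)
  · exact fun i j hij => Matrix.diagonal_apply_ne _ hij
  · intro i
    rw [Matrix.diagonal_apply_eq]
    exact hdd i
  · have hUL : (Matrix.of fun i j => d i j * (d j j)⁻¹) * (Matrix.diagonal fun i => d i i) = d := by
      ext i j
      rw [Matrix.mul_diagonal]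
      dsimp only [Matrix.of_apply]
      rw [inv_mul_cancel_right₀ (hdd j)]
    rw [Matrix.mul_assoc, hUL]
    exact hτeq
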